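/- Let H ≥ 1 be an integer, set α_t := (H+1)/(H+t) for t ≥ 1, and define α_t^t := α_t and α_t^j := α_j·∏_{k=j+1}^t (1 − α_k) for 1 ≤ j < t. Then for every t ≥ 1: Σ_{j=1}^t α_t^j / j = (H+1)/(H·t) − (H+1)·(t−1)!·(H−1)!/(H+t)!, and in particular Σ_{j=1}^t α_t^j / j ≤ (1 + 1/H)/t. -/

import Mathlib

/-- Value-iteration step size `α_t = (H+1)/(H+t)`. -/
noncomputable def stepAlpha (H t : ℕ) : ℝ := ((H : ℝ) + 1) / ((H : ℝ) + t)

/-- Anytime-averaging weights `α_t^j = α_j ∏_{k=j+1}^t (1 − α_k)` (so `α_t^t = α_t`). -/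
noncomputable def alphaW (H t j : ℕ) : ℝ :=
  stepAlpha H j * ∏ k ∈ Finset.Icc (j + 1) t, (1 - stepAlpha H k)

lemma alphaW_sum_div_eq (H : ℕ) (hH : 1 ≤ H) : ∀ t : ℕ, 1 ≤ t →
    (∑ j ∈ Finset.Icc 1 t, alphaW H t j / j) =
      ((H : ℝ) + 1) / ((H : ℝ) * t)
        - ((H : ℝ) + 1) * (Nat.factorial (t - 1) : ℝ) * (Nat.factorial (H - 1) : ℝ) /
            (Nat.factorial (H + t) : ℝ) := by
  have hH0 : (H : ℝ) ≠ 0 := Nat.cast_ne_zero.mpr (by omega)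
  intro t ht
  induction t with
  | zero => omega
  | succ t ih =>
    rcases Nat.eq_or_lt_of_le ht with h1 | h1
    · -- t + 1 = 1
      have : t = 0 := by omega
      subst this
      simp only [Finset.Icc_self, Finset.sum_singleton, alphaW, stepAlpha]
      rw [show (1:ℕ) + 1 = 2 by rfl]
      rw [Finset.Icc_eq_empty (by omega), Finset.prod_empty]
      have hfact : (Nat.factorial (H + 1) : ℝ) = ((H:ℝ) + 1) * H * (Nat.factorial (H - 1)) := by
        obtain ⟨m, rfl⟩ : ∃ m, H = m + 1 := ⟨H - 1, by omega⟩
        simp [Nat.factorial_succ, Nat.factorial]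
        ring
      have hfne : (Nat.factorial (H - 1) : ℝ) ≠ 0 := Nat.cast_ne_zero.mpr (Nat.factorial_ne_zero _)
      rw [hfact]
      simp only [Nat.cast_one, Nat.factorial_zero]
      have hH1 : (H : ℝ) + 1 ≠ 0 := by positivity
      field_simp
      ring
    · -- t ≥ 1
      have ht1 : 1 ≤ t := by omega
      have IH := ih ht1
      have hsplit : ∑ j ∈ Finset.Icc 1 (t+1), alphaW H (t+1) j / j
          = (∑ j ∈ Finset.Icc 1 t, alphaW H (t+1) j / j) + alphaW H (t+1) (t+1) / ((t+1 : ℕ) : ℝ) := by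
        rw [← Finset.sum_Icc_succ_top (by omega)]
      have hstep : ∀ j ∈ Finset.Icc 1 t,
          alphaW H (t+1) j / j = (alphaW H t j / j) * (1 - stepAlpha H (t+1)) := by
        intro j hj
        simp only [Finset.mem_Icc] at hj
        unfold alphaW
        rw [Finset.prod_Icc_succ_top (by omega)]
        ring
      have htop : alphaW H (t+1) (t+1) = stepAlpha H (t+1) := by
        unfold alphaW
        rw [Finset.Icc_eq_empty (by omega), Finset.prod_empty, mul_one]
      rw [hsplit, Finset.sum_congr rfl hstep, ← Finset.sum_mul, IH, htop]
      -- now pure algebra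
      have ht0 : (t : ℝ) ≠ 0 := Nat.cast_ne_zero.mpr (by omega)
      have hHt1 : (H : ℝ) + (t + 1) ≠ 0 := by positivity
      have hfHt : (Nat.factorial (H + t) : ℝ) ≠ 0 := Nat.cast_ne_zero.mpr (Nat.factorial_ne_zero _)
      have hfsucc : (Nat.factorial (H + (t+1)) : ℝ)
          = ((H:ℝ) + t + 1) * (Nat.factorial (H + t)) := by
        rw [show H + (t+1) = (H + t) + 1 by ring, Nat.factorial_succ]
        push_cast; ring
      have hftsub : (Nat.factorial (t + 1 - 1) : ℝ) = (t : ℝ) * (Nat.factorial (t - 1)) := by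
        rw [Nat.add_sub_cancel, ← Nat.mul_factorial_pred (by omega)]
        push_cast; ring
      rw [hfsucc, hftsub, stepAlpha]
      have ht10 : (t : ℝ) + 1 ≠ 0 := by positivity
      have hHt : (H : ℝ) + t + 1 ≠ 0 := by positivity
      field_simp
      push_cast
      ring

/-- the identity
`Σ_{j=1}^t α_t^j / j = (H+1)/(H·t) − (H+1)·(t−1)!·(H−1)!/(H+t)!` and the bound
`Σ_{j=1}^t α_t^j / j ≤ (1 + 1/H)/t`. -/
theorem alphaW_sum_div_bound (H : ℕ) (hH : 1 ≤ H) (t : ℕ) (ht : 1 ≤ t) :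
    (∑ j ∈ Finset.Icc 1 t, alphaW H t j / j) =
      ((H : ℝ) + 1) / ((H : ℝ) * t)
        - ((H : ℝ) + 1) * (Nat.factorial (t - 1) : ℝ) * (Nat.factorial (H - 1) : ℝ) /
            (Nat.factorial (H + t) : ℝ)
    ∧ (∑ j ∈ Finset.Icc 1 t, alphaW H t j / j) ≤ (1 + 1 / (H : ℝ)) / t := by
  have heq := alphaW_sum_div_eq H hH t ht
  refine ⟨heq, ?_⟩
  rw [heq]
  have hH0 : (0:ℝ) < H := by exact_mod_cast Nat.pos_of_ne_zero (by omega)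
  have ht0 : (0:ℝ) < t := by exact_mod_cast Nat.pos_of_ne_zero (by omega)
  have hrhs : (1 + 1 / (H : ℝ)) / t = ((H : ℝ) + 1) / ((H : ℝ) * t) := by
    rw [one_add_div (ne_of_gt hH0), div_div]
  rw [hrhs]
  have : (0:ℝ) ≤ ((H : ℝ) + 1) * (Nat.factorial (t - 1) : ℝ) * (Nat.factorial (H - 1) : ℝ) /
      (Nat.factorial (H + t) : ℝ) := by positivity
  linarith
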